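/- Let d ≥ 1 and let Q₁ ⊆ Q₂ ⊆ Q₃ ⊆ … be an increasing sequence of axis-parallel cubes in ℝ^d, and let Q_∞ = ⋃_n Q_n. Let f be a nonnegative measurable function on Q_∞ with f ∈ L¹(Q_n) for every n, ∫_{Q₁} f < ∞, and var_{interior(Q_∞)} f < ∞. Then limsup_{n→∞} f_{Q_n} < ∞. -/

import Mathlib

open MeasureTheory Metric Set Filter
open scoped ENNReal Topology

noncomputable section

/-- `ℝ^d` as Euclidean space. -/
abbrev Ed (d : ℕ) := EuclideanSpace ℝ (Fin d)

/-- An axis-parallel cube `∏_i [a_i, a_i + l]` with positive side length `l`. -/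
def IsCube {d : ℕ} (Q : Set (Ed d)) : Prop :=
  ∃ (a : Ed d) (l : ℝ), 0 < l ∧ Q = {x : Ed d | ∀ i, x i ∈ Set.Icc (a i) (a i + l)}

/-- Divergence of a vector field `φ : ℝ^d → ℝ^d`. -/
def divergence {d : ℕ} (φ : Ed d → Ed d) (x : Ed d) : ℝ :=
  ∑ i, fderiv ℝ φ x (EuclideanSpace.single i 1) i

/-- The variation of `f` in `Ω`. -/
def var {d : ℕ} (Ω : Set (Ed d)) (f : Ed d → ℝ) : ℝ≥0∞ :=
  ⨆ φ ∈ {φ : Ed d → Ed d | ContDiff ℝ 1 φ ∧ HasCompactSupport φ ∧ tsupport φ ⊆ Ω ∧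
      ∀ x, ‖φ x‖ ≤ 1},
    ENNReal.ofReal (∫ x in Ω, f x * divergence φ x)

/-! ### Boxes -/

def bx {d : ℕ} (u v : Fin d → ℝ) : Set (Ed d) := {x : Ed d | ∀ i, x i ∈ Set.Icc (u i) (v i)}
def obx {d : ℕ} (u v : Fin d → ℝ) : Set (Ed d) := {x : Ed d | ∀ i, x i ∈ Set.Ioo (u i) (v i)}

lemma bx_closed {d : ℕ} (u v : Fin d → ℝ) : IsClosed (bx u v) := by
  have : bx u v = ⋂ i, (fun x : Ed d => x i) ⁻¹' (Set.Icc (u i) (v i)) := by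
    ext x; simp [bx, Set.mem_iInter]
  rw [this]
  exact isClosed_iInter fun i => IsClosed.preimage (PiLp.continuous_apply 2 (fun _ : Fin d => ℝ) i) isClosed_Icc

lemma obx_open {d : ℕ} (u v : Fin d → ℝ) : IsOpen (obx u v) := by
  have : obx u v = ⋂ i, (fun x : Ed d => x i) ⁻¹' (Set.Ioo (u i) (v i)) := by
    ext x; simp [obx, Set.mem_iInter]
  rw [this]
  exact isOpen_iInter_of_finite fun i => IsOpen.preimage (PiLp.continuous_apply 2 (fun _ : Fin d => ℝ) i) isOpen_Ioo

lemma bx_measurable {d : ℕ} (u v : Fin d → ℝ) : MeasurableSet (bx u v) :=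
  (bx_closed u v).measurableSet

lemma obx_measurable {d : ℕ} (u v : Fin d → ℝ) : MeasurableSet (obx u v) :=
  (obx_open u v).measurableSet

lemma obx_subset_bx {d : ℕ} (u v : Fin d → ℝ) : obx u v ⊆ bx u v :=
  fun x hx i => ⟨le_of_lt (hx i).1, le_of_lt (hx i).2⟩

lemma bx_compact {d : ℕ} (u v : Fin d → ℝ) : IsCompact (bx u v) := by
  have h : bx u v = (PiLp.continuousLinearEquiv 2 ℝ (fun _ : Fin d => ℝ)).symm ''
      (Set.univ.pi fun i => Set.Icc (u i) (v i)) := by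
    ext x
    constructor
    · intro hx
      exact ⟨fun i => x i, fun i _ => hx i, rfl⟩
    · rintro ⟨y, hy, rfl⟩
      exact fun i => hy i (Set.mem_univ i)
  rw [h]
  exact (isCompact_univ_pi fun i => isCompact_Icc).image
    (PiLp.continuousLinearEquiv 2 ℝ (fun _ : Fin d => ℝ)).symm.continuous

lemma volume_bx {d : ℕ} (u v : Fin d → ℝ) :
    volume (bx u v) = ∏ i, ENNReal.ofReal (v i - u i) := by
  have h : bx u v = (MeasurableEquiv.toLp 2 (Fin d → ℝ)).symm ⁻¹'
      (Set.univ.pi fun i => Set.Icc (u i) (v i)) := by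
    ext x
    simp [bx, Set.mem_pi, Pi.le_def, forall_and, Set.mem_Icc,
      forall_and]
  rw [h, (EuclideanSpace.volume_preserving_symm_measurableEquiv_toLp (Fin d)).measure_preimage
    ((MeasurableSet.univ_pi fun i => measurableSet_Icc).nullMeasurableSet), volume_pi_pi]
  simp [Real.volume_Icc]

lemma volume_obx {d : ℕ} (u v : Fin d → ℝ) :
    volume (obx u v) = ∏ i, ENNReal.ofReal (v i - u i) := by
  have h : obx u v = (MeasurableEquiv.toLp 2 (Fin d → ℝ)).symm ⁻¹'
      (Set.univ.pi fun i => Set.Ioo (u i) (v i)) := by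
    ext x
    simp [obx, Set.mem_pi]
  rw [h, (EuclideanSpace.volume_preserving_symm_measurableEquiv_toLp (Fin d)).measure_preimage
    ((MeasurableSet.univ_pi fun i => measurableSet_Ioo).nullMeasurableSet), volume_pi_pi]
  simp [Real.volume_Ioo]



/-- Data of a normalized smooth bump adapted to the interval `[α, α+l]` with margin `δ`. -/
structure NBump (α l δ : ℝ) where
  f : ℝ → ℝ
  smooth : ContDiff ℝ 1 f
  nonneg : ∀ t, 0 ≤ f t
  integrable : MeasureTheory.Integrable f
  total : (∫ t, f t) = 1
  supp : ∀ t, t ∉ Set.Icc (α + δ/2) (α + l - δ/2) → f t = 0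
  le : ∀ t, f t ≤ 2 / l
  ge : ∀ t ∈ Set.Icc (α + δ) (α + l - δ), 1 / l ≤ f t

lemma NBump.exists_ (α l δ : ℝ) (hl : 0 < l) (hδ : 0 < δ) (hδ4 : δ ≤ l/4) :
    Nonempty (NBump α l δ) := by
  set c : ℝ := α + l/2 with hc
  have h1 : (0:ℝ) < l/2 - δ := by linarith
  have h2 : l/2 - δ < l/2 - δ/2 := by linarith
  set ψ : ContDiffBump c := ⟨l/2 - δ, l/2 - δ/2, h1, h2⟩ with hψ
  have hIpos : 0 < ∫ t, ψ t := ψ.integral_pos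
  -- upper bound for the integral
  have hIle : (∫ t, ψ t) ≤ l - δ := by
    have h3 : (∫ t, ψ t) = ∫ t in ball c ψ.rOut, ψ t := by
      rw [← setIntegral_eq_integral_of_forall_compl_eq_zero]
      intro x hx
      apply ψ.zero_of_le_dist
      simpa [not_lt, dist_comm] using hx
    rw [h3]
    calc ∫ t in ball c ψ.rOut, ψ t ≤ ∫ _t in ball c ψ.rOut, (1:ℝ) := by
          apply setIntegral_mono_on (ψ.integrable.integrableOn)
            (integrableOn_const (by rw [Real.volume_ball]; exact ENNReal.ofReal_ne_top))
            measurableSet_ball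
          intro t _; exact ψ.le_one
      _ = l - δ := by
          simp [Real.volume_ball]
          rw [Real.volume_real_ball (by show (0:ℝ) ≤ l/2 - δ/2; linarith)]
          show 2 * (l/2 - δ/2) = l - δ
          ring
  have hIge : l - 2*δ ≤ ∫ t, ψ t := by
    have h3 : (∫ t in closedBall c ψ.rIn, ψ t) = l - 2*δ := by
      rw [setIntegral_congr_fun measurableSet_closedBall
        (fun t ht => ψ.one_of_mem_closedBall ht)]
      simp [Real.volume_closedBall]
      rw [Real.volume_real_closedBall (by show (0:ℝ) ≤ l/2 - δ; linarith)]
      show 2 * (l/2 - δ) = l - 2*δ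
      ring
    calc l - 2*δ = ∫ t in closedBall c ψ.rIn, ψ t := h3.symm
      _ ≤ ∫ t, ψ t := setIntegral_le_integral ψ.integrable
          (Filter.Eventually.of_forall fun t => ψ.nonneg)
  refine ⟨⟨fun t => (∫ s, ψ s)⁻¹ * ψ t, ?_, ?_, ?_, ?_, ?_, ?_, ?_⟩⟩
  · exact contDiff_const.mul (ψ.contDiff (n := 1))
  · intro t; exact mul_nonneg (le_of_lt (inv_pos.2 hIpos)) ψ.nonneg
  · exact ψ.integrable.const_mul _
  · rw [MeasureTheory.integral_const_mul, inv_mul_cancel₀ (ne_of_gt hIpos)]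
  · intro t ht
    have : ψ t = 0 := by
      apply ψ.zero_of_le_dist
      simp only [Set.mem_Icc, not_and_or, not_le] at ht
      rw [Real.dist_eq]
      rcases ht with h | h
      · rw [abs_sub_comm, abs_of_pos (by simp [hc]; linarith)]
        show l/2 - δ/2 ≤ c - t
        simp [hc]; linarith
      · rw [abs_of_pos (by simp [hc]; linarith)]
        show l/2 - δ/2 ≤ t - c
        simp [hc]; linarith
    simp [this]
  · intro t
    calc (∫ s, ψ s)⁻¹ * ψ t ≤ (∫ s, ψ s)⁻¹ * 1 :=
        mul_le_mul_of_nonneg_left ψ.le_one (le_of_lt (inv_pos.2 hIpos))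
      _ ≤ 2 / l := by
        rw [mul_one]
        rw [inv_le_comm₀ hIpos (by positivity)]
        have h4 : (2 / l)⁻¹ = l / 2 := by
          rw [div_eq_mul_inv, mul_inv, inv_inv]; ring
        rw [h4]
        linarith
  · intro t ht
    obtain ⟨ht1, ht2⟩ := ht
    have hψ1 : ψ t = 1 := ψ.one_of_mem_closedBall (by
      rw [Real.closedBall_eq_Icc]
      constructor
      · show α + l/2 - (l/2 - δ) ≤ t; linarith
      · show t ≤ α + l/2 + (l/2 - δ); linarith)
    show 1 / l ≤ (∫ s, ψ s)⁻¹ * ψ t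
    rw [hψ1, mul_one]
    rw [le_inv_comm₀ (by positivity) hIpos]
    have h4 : (1 / l)⁻¹ = l := by simp
    rw [h4]
    linarith


variable {a b : ℝ → ℝ} {β m M : ℝ}

def Hfun (β : ℝ) (a b : ℝ → ℝ) : ℝ → ℝ := fun x => ∫ t in β..x, (a t - b t)

variable {a b : ℝ → ℝ} {β m M : ℝ}

lemma Hfun_hasDerivAt (ha : Continuous a) (hb : Continuous b)
    (hai : Integrable a) (hbi : Integrable b) (x : ℝ) :
    HasDerivAt (Hfun β a b) (a x - b x) x := by
  apply intervalIntegral.integral_hasDerivAt_right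
  · exact ((hai.sub hbi).intervalIntegrable)
  · exact (ha.sub hb).aestronglyMeasurable.stronglyMeasurableAtFilter
  · exact (ha.sub hb).continuousAt

lemma Hfun_contDiff (ha : Continuous a) (hb : Continuous b)
    (hai : Integrable a) (hbi : Integrable b) : ContDiff ℝ 1 (Hfun β a b) := by
  rw [contDiff_one_iff_deriv]
  constructor
  · exact fun x => (Hfun_hasDerivAt ha hb hai hbi x).differentiableAt
  · have : deriv (Hfun β a b) = fun x => a x - b x := by
      ext x; exact (Hfun_hasDerivAt ha hb hai hbi x).deriv
    rw [this]; exact ha.sub hb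

lemma Hfun_abs_le (hai : Integrable a) (hbi : Integrable b)
    (ha0 : ∀ t, 0 ≤ a t) (hb0 : ∀ t, 0 ≤ b t)
    (hat : (∫ t, a t) = 1) (hbt : (∫ t, b t) = 1) (x : ℝ) :
    |Hfun β a b x| ≤ 1 := by
  have hsplit : Hfun β a b x = (∫ t in β..x, a t) - ∫ t in β..x, b t :=
    intervalIntegral.integral_sub (hai.intervalIntegrable) (hbi.intervalIntegrable)
  have h1 : ∀ (g : ℝ → ℝ), Integrable g → (∀ t, 0 ≤ g t) → (∫ t, g t) = 1 →
      ∀ (u v : ℝ), (∫ t in Set.Ioc u v, g t) ∈ Set.Icc (0:ℝ) 1 := by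
    intro g hgi hg0 hgt u v
    constructor
    · exact setIntegral_nonneg measurableSet_Ioc fun t _ => hg0 t
    · rw [← hgt]
      exact setIntegral_le_integral hgi (Filter.Eventually.of_forall hg0)
  rcases le_total β x with h | h
  · rw [hsplit, intervalIntegral.integral_of_le h, intervalIntegral.integral_of_le h]
    obtain ⟨u1, u2⟩ := h1 a hai ha0 hat β x
    obtain ⟨v1, v2⟩ := h1 b hbi hb0 hbt β x
    rw [abs_sub_le_iff]
    constructor <;> linarith
  · rw [hsplit, intervalIntegral.integral_of_ge h, intervalIntegral.integral_of_ge h]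
    obtain ⟨u1, u2⟩ := h1 a hai ha0 hat x β
    obtain ⟨v1, v2⟩ := h1 b hbi hb0 hbt x β
    rw [abs_sub_le_iff]
    constructor <;> linarith

lemma Hfun_zero_of_lt (hβ : β < m)
    (ha : ∀ t, t ∉ Set.Icc m M → a t = 0) (hb : ∀ t, t ∉ Set.Icc m M → b t = 0)
    (x : ℝ) (hx : x < m) : Hfun β a b x = 0 := by
  rw [Hfun]
  rw [intervalIntegral.integral_congr (g := fun _ => (0:ℝ)) ?_]
  · simp
  · intro t ht
    rw [Set.uIcc_eq_union] at ht
    have htm : t < m := by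
      rcases ht with h | h
      · exact lt_of_le_of_lt h.2 hx
      · exact lt_of_le_of_lt h.2 hβ
    have h1 : t ∉ Set.Icc m M := fun hc => absurd hc.1 (not_le.2 htm)
    simp [ha t h1, hb t h1]

lemma Hfun_zero_of_gt (hβ : β < m) (hmM : m ≤ M)
    (hai : Integrable a) (hbi : Integrable b)
    (hat : (∫ t, a t) = 1) (hbt : (∫ t, b t) = 1)
    (ha : ∀ t, t ∉ Set.Icc m M → a t = 0) (hb : ∀ t, t ∉ Set.Icc m M → b t = 0)
    (x : ℝ) (hx : M < x) : Hfun β a b x = 0 := by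
  have hβx : β ≤ x := by linarith
  have key : ∀ (g : ℝ → ℝ), Integrable g → (∫ t, g t) = 1 →
      (∀ t, t ∉ Set.Icc m M → g t = 0) → (∫ t in β..x, g t) = 1 := by
    intro g hgi hgt hg
    rw [intervalIntegral.integral_of_le hβx]
    rw [setIntegral_eq_integral_of_forall_compl_eq_zero, hgt]
    intro t ht
    apply hg
    intro hc
    exact ht ⟨lt_of_lt_of_le hβ hc.1, le_trans hc.2 (le_of_lt hx)⟩
  have hsplit : Hfun β a b x = (∫ t in β..x, a t) - ∫ t in β..x, b t :=
    intervalIntegral.integral_sub (hai.intervalIntegrable) (hbi.intervalIntegrable)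
  rw [hsplit, key a hai hat ha, key b hbi hbt hb, sub_self]

lemma telescope {d : ℕ} (t s : Fin d → ℝ) :
    ∑ i : Fin d, ((t i - s i) * ∏ j ∈ Finset.univ.erase i,
      (if (j:ℕ) < (i:ℕ) then t j else s j))
      = (∏ j, t j) - ∏ j, s j := by
  set p : ℕ → ℝ := fun k => ∏ j : Fin d, (if (j:ℕ) < k then t j else s j) with hp
  have hp0 : p 0 = ∏ j, s j := by simp [hp]
  have hpd : p d = ∏ j, t j := by
    show (∏ j : Fin d, if (j:ℕ) < d then t j else s j) = _
    apply Finset.prod_congr rfl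
    intro j _
    simp [j.isLt]
  have hstep : ∀ k, k < d → ∀ (hk : k < d),
      p (k+1) - p k = (t ⟨k, hk⟩ - s ⟨k, hk⟩) * ∏ j ∈ Finset.univ.erase (⟨k, hk⟩ : Fin d),
        (if (j:ℕ) < k then t j else s j) := by
    intro k _ hk
    set i : Fin d := ⟨k, hk⟩ with hi
    have hF : p (k+1) = t i * ∏ j ∈ Finset.univ.erase i, (if (j:ℕ) < k then t j else s j) := by
      show (∏ j : Fin d, if (j:ℕ) < k + 1 then t j else s j) = _
      rw [← Finset.mul_prod_erase Finset.univ _ (Finset.mem_univ i)]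
      congr 1
      · simp [hi]
      · apply Finset.prod_congr rfl
        intro j hj
        have hne : (j:ℕ) ≠ k := by
          intro hc
          exact (Finset.mem_erase.1 hj).1 (Fin.ext hc)
        congr 1
        simp only [eq_iff_iff]
        omega
    have hG : p k = s i * ∏ j ∈ Finset.univ.erase i, (if (j:ℕ) < k then t j else s j) := by
      show (∏ j : Fin d, if (j:ℕ) < k then t j else s j) = _
      rw [← Finset.mul_prod_erase Finset.univ _ (Finset.mem_univ i)]
      congr 1
      simp [hi]
    rw [hF, hG]
    ring
  calc ∑ i : Fin d, ((t i - s i) * ∏ j ∈ Finset.univ.erase i,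
        (if (j:ℕ) < (i:ℕ) then t j else s j))
      = ∑ k ∈ Finset.range d, (p (k+1) - p k) := by
        rw [Finset.sum_range fun k => _]
        apply Finset.sum_congr rfl
        intro i _
        rw [hstep i i.isLt i.isLt]
    _ = p d - p 0 := Finset.sum_range_sub p d
    _ = (∏ j, t j) - ∏ j, s j := by rw [hp0, hpd]

def mkField {d : ℕ} (g : Fin d → Ed d → ℝ) : Ed d → Ed d :=
  fun y => (PiLp.continuousLinearEquiv 2 ℝ (fun _ : Fin d => ℝ)).symm (fun i => g i y)

lemma mkField_apply {d : ℕ} (g : Fin d → Ed d → ℝ) (y : Ed d) (i : Fin d) :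
    mkField g y i = g i y := rfl

lemma mkField_hasFDerivAt {d : ℕ} (g : Fin d → Ed d → ℝ) (L : Fin d → (Ed d →L[ℝ] ℝ))
    (x : Ed d) (h : ∀ i, HasFDerivAt (g i) (L i) x) :
    HasFDerivAt (mkField g)
      ((PiLp.continuousLinearEquiv 2 ℝ (fun _ : Fin d => ℝ)).symm.toContinuousLinearMap.comp
        (ContinuousLinearMap.pi L)) x := by
  have h1 : HasFDerivAt (fun y : Ed d => (fun i => g i y : Fin d → ℝ))
      (ContinuousLinearMap.pi L) x := hasFDerivAt_pi.mpr h
  exact ((PiLp.continuousLinearEquiv 2 ℝ (fun _ : Fin d => ℝ)).symm.toContinuousLinearMap.hasFDerivAt).comp x h1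

lemma mkField_divergence {d : ℕ} (g : Fin d → Ed d → ℝ) (L : Fin d → (Ed d →L[ℝ] ℝ))
    (x : Ed d) (h : ∀ i, HasFDerivAt (g i) (L i) x) :
    divergence (mkField g) x = ∑ i, L i (EuclideanSpace.single i 1) := by
  rw [divergence, (mkField_hasFDerivAt g L x h).fderiv]
  rfl

lemma prodField_hasFDerivAt {d : ℕ} (u u' : Fin d → ℝ → ℝ) (x : Ed d)
    (h : ∀ j, HasDerivAt (u j) (u' j (x j)) (x j)) :
    HasFDerivAt (fun y : Ed d => ∏ j, u j (y j))
      (∑ j, ((∏ k ∈ Finset.univ.erase j, u k (x k)) * u' j (x j)) •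
        (EuclideanSpace.proj j : Ed d →L[ℝ] ℝ)) x := by
  have hj : ∀ j : Fin d, HasFDerivAt (fun y : Ed d => u j (y j))
      ((u' j (x j)) • (EuclideanSpace.proj j : Ed d →L[ℝ] ℝ)) x := by
    intro j
    have hp : HasFDerivAt (fun y : Ed d => y j)
        (EuclideanSpace.proj j : Ed d →L[ℝ] ℝ) x :=
      (EuclideanSpace.proj j : Ed d →L[ℝ] ℝ).hasFDerivAt
    have := ((h j).hasFDerivAt).comp x hp
    refine this.congr_fderiv ?_
    ext v
    simp [ContinuousLinearMap.smulRight_apply]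
    ring
  have := HasFDerivAt.finset_prod (u := Finset.univ) (fun j _ => hj j)
  refine this.congr_fderiv ?_
  ext v
  simp [smul_smul]

lemma prodField_deriv_apply {d : ℕ} (u u' : Fin d → ℝ → ℝ) (x : Ed d) (i : Fin d)
    (h : ∀ j, HasDerivAt (u j) (u' j (x j)) (x j)) :
    (∑ j, ((∏ k ∈ Finset.univ.erase j, u k (x k)) * u' j (x j)) •
        (EuclideanSpace.proj j : Ed d →L[ℝ] ℝ)) (EuclideanSpace.single i 1)
      = u' i (x i) * ∏ k ∈ Finset.univ.erase i, u k (x k) := by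
  rw [ContinuousLinearMap.sum_apply]
  rw [Finset.sum_eq_single i]
  · simp [EuclideanSpace.single_apply]
    ring
  · intro j _ hji
    simp [EuclideanSpace.single_apply]
    intro hc
    exact absurd hc.symm (fun hc2 => hji hc2.symm)
  · intro hi; exact absurd (Finset.mem_univ i) hi


section KEY

variable {d : ℕ}

lemma keydelta (hd : 1 ≤ d) (A Cc : Fin d → ℝ) (L l δ : ℝ) (hL : 0 < L) (hl : 0 < l)
    (hδ : 0 < δ) (hδ4 : δ ≤ L/4)
    (hsub : ∀ j, A j ≤ Cc j ∧ Cc j + l ≤ A j + L)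
    (f : Ed d → ℝ) (hmeas : Measurable f)
    (Ω : Set (Ed d)) (hΩ : obx A (fun i => A i + L) ⊆ Ω)
    (hfR : IntegrableOn f (bx A (fun i => A i + L)) volume)
    (hpos : ∀ x ∈ bx A (fun i => A i + L), 0 ≤ f x)
    (hvar : var Ω f ≠ ⊤) :
    (L^d)⁻¹ * ∫ x in bx (fun i => A i + δ) (fun i => A i + L - δ), f x ≤
      Real.sqrt d * (2/l)^(d-1) * (var Ω f).toReal
        + (2/l)^d * ∫ x in bx Cc (fun i => Cc i + l), f x := by
  have hj0 : Nonempty (Fin d) := ⟨⟨0, lt_of_lt_of_le zero_lt_one hd⟩⟩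
  obtain ⟨j0⟩ := hj0
  have hlL : l ≤ L := by have h := hsub j0; linarith [h.1, h.2]
  -- bumps
  have haB : ∀ j : Fin d, Nonempty (NBump (A j) L δ) :=
    fun j => NBump.exists_ _ _ _ hL hδ hδ4
  have hbB : ∀ j : Fin d, Nonempty (NBump (Cc j) l (l/4)) :=
    fun j => NBump.exists_ _ _ _ hl (by linarith) (le_refl _)
  set aB : ∀ j : Fin d, NBump (A j) L δ := fun j => (haB j).some with haBdef
  set bB : ∀ j : Fin d, NBump (Cc j) l (l/4) := fun j => (hbB j).some with hbBdef
  set H : Fin d → ℝ → ℝ := fun i => Hfun (A i - 1) (aB i).f (bB i).f with hHdef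
  set m : Fin d → ℝ := fun j => min (A j + δ/2) (Cc j + (l/4)/2) with hmdef
  set M : Fin d → ℝ := fun j => max (A j + L - δ/2) (Cc j + l - (l/4)/2) with hMdef
  -- coordinate facts
  have hm_gt : ∀ j, A j < m j := by
    intro j
    apply lt_min (by linarith)
    have := (hsub j).1; linarith
  have hM_lt : ∀ j, M j < A j + L := by
    intro j
    apply max_lt (by linarith)
    have := (hsub j).2; linarith
  have hmM : ∀ j, m j ≤ M j := by
    intro j
    calc m j ≤ A j + δ/2 := min_le_left _ _
      _ ≤ A j + L - δ/2 := by linarith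
      _ ≤ M j := le_max_left _ _
  have hβ : ∀ j, A j - 1 < m j := fun j => lt_trans (by linarith) (hm_gt j)
  have hsuppA : ∀ (j : Fin d) (t : ℝ), t ∉ Set.Icc (m j) (M j) → (aB j).f t = 0 := by
    intro j t ht
    apply (aB j).supp
    intro hc
    exact ht ⟨le_trans (min_le_left _ _) hc.1, le_trans hc.2 (le_max_left _ _)⟩
  have hsuppB : ∀ (j : Fin d) (t : ℝ), t ∉ Set.Icc (m j) (M j) → (bB j).f t = 0 := by
    intro j t ht
    apply (bB j).supp
    intro hc
    exact ht ⟨le_trans (min_le_right _ _) hc.1, le_trans hc.2 (le_max_right _ _)⟩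
  have hH0 : ∀ (j : Fin d) (t : ℝ), t ∉ Set.Icc (m j) (M j) → H j t = 0 := by
    intro j t ht
    rw [Set.mem_Icc, not_and_or, not_le, not_le] at ht
    rcases ht with h | h
    · exact Hfun_zero_of_lt (hβ j) (hsuppA j) (hsuppB j) t h
    · exact Hfun_zero_of_gt (hβ j) (hmM j) (aB j).integrable (bB j).integrable
        (aB j).total (bB j).total (hsuppA j) (hsuppB j) t h
  have hHd : ∀ (j : Fin d) (t : ℝ), HasDerivAt (H j) ((aB j).f t - (bB j).f t) t :=
    fun j t => Hfun_hasDerivAt (aB j).smooth.continuous (bB j).smooth.continuous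
      (aB j).integrable (bB j).integrable t
  have hH1 : ∀ (j : Fin d) (t : ℝ), |H j t| ≤ 1 :=
    fun j t => Hfun_abs_le (aB j).integrable (bB j).integrable (aB j).nonneg (bB j).nonneg
      (aB j).total (bB j).total t
  have hHsm : ∀ j : Fin d, ContDiff ℝ 1 (H j) :=
    fun j => Hfun_contDiff (aB j).smooth.continuous (bB j).smooth.continuous
      (aB j).integrable (bB j).integrable
  -- the vector field
  set U : Fin d → Fin d → ℝ → ℝ := fun i j =>
    if j = i then H i else if (j:ℕ) < (i:ℕ) then (aB j).f else (bB j).f with hUdef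
  set comp : Fin d → Ed d → ℝ := fun i y => ∏ j, U i j (y j) with hcompdef
  set φ : Ed d → Ed d := mkField comp with hφdef
  set Pa : Ed d → ℝ := fun x => ∏ j, (aB j).f (x j) with hPadef
  set Pb : Ed d → ℝ := fun x => ∏ j, (bB j).f (x j) with hPbdef
  set g : Ed d → ℝ := fun x => Pa x - Pb x with hgdef
  -- smoothness of factors
  have hUsm : ∀ i j, ContDiff ℝ 1 (U i j) := by
    intro i j
    rw [hUdef]
    dsimp only
    split
    · exact hHsm i
    · split
      · exact (aB j).smooth
      · exact (bB j).smooth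
  have hU0 : ∀ (i j : Fin d) (t : ℝ), t ∉ Set.Icc (m j) (M j) → U i j t = 0 := by
    intro i j t ht
    rw [hUdef]
    dsimp only
    split
    · rename_i hji; subst hji; exact hH0 j t ht
    · split
      · exact hsuppA j t ht
      · exact hsuppB j t ht
  -- derivative data
  set D : Fin d → Fin d → ℝ → ℝ := fun i j =>
    if j = i then (fun t => (aB i).f t - (bB i).f t) else deriv (U i j) with hDdef
  have hD : ∀ (i j : Fin d) (t : ℝ), HasDerivAt (U i j) (D i j t) t := by
    intro i j t
    rw [hDdef, hUdef]
    dsimp only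
    split
    · rename_i hji; subst hji; exact hHd j t
    · rename_i hji
      have hsm : ContDiff ℝ 1 (if (j:ℕ) < (i:ℕ) then (aB j).f else (bB j).f) := by
        split
        · exact (aB j).smooth
        · exact (bB j).smooth
      have hdiff := (hsm.differentiable one_ne_zero) t
      have := hdiff.hasDerivAt
      convert this using 2 <;> rw [hUdef] <;> simp [hji]
  -- componentwise derivative
  have hcompfd : ∀ (i : Fin d) (x : Ed d), HasFDerivAt (comp i)
      (∑ j, ((∏ k ∈ Finset.univ.erase j, U i k (x k)) * D i j (x j)) •
        (EuclideanSpace.proj j : Ed d →L[ℝ] ℝ)) x := by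
    intro i x
    exact prodField_hasFDerivAt (U i) (D i) x (fun j => hD i j (x j))
  -- divergence identity
  have hφdiv : ∀ x, divergence φ x = g x := by
    intro x
    rw [hφdef]
    rw [mkField_divergence comp _ x (fun i => hcompfd i x)]
    have hterm : ∀ i : Fin d,
        (∑ j, ((∏ k ∈ Finset.univ.erase j, U i k (x k)) * D i j (x j)) •
          (EuclideanSpace.proj j : Ed d →L[ℝ] ℝ)) (EuclideanSpace.single i 1)
        = ((aB i).f (x i) - (bB i).f (x i)) *
            ∏ k ∈ Finset.univ.erase i, (if (k:ℕ) < (i:ℕ) then (aB k).f (x k) else (bB k).f (x k)) := by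
      intro i
      rw [prodField_deriv_apply (U i) (D i) x i (fun j => hD i j (x j))]
      congr 1
      · rw [hDdef]; simp
      · apply Finset.prod_congr rfl
        intro k hk
        have hki : ¬ (k = i) := (Finset.mem_erase.1 hk).1
        rw [hUdef]
        dsimp only
        rw [if_neg hki]
        split <;> rfl
    rw [Finset.sum_congr rfl (fun i _ => hterm i)]
    rw [telescope (fun j => (aB j).f (x j)) (fun j => (bB j).f (x j))]
  -- support box
  set K : Set (Ed d) := bx m M with hKdef
  have hKsub_obx : K ⊆ obx A (fun i => A i + L) := by
    intro x hx i
    have h := hx i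
    exact ⟨lt_of_lt_of_le (hm_gt i) h.1, lt_of_le_of_lt h.2 (hM_lt i)⟩
  have hcomp0 : ∀ (i : Fin d) (x : Ed d), x ∉ K → comp i x = 0 := by
    intro i x hx
    rw [hcompdef]
    dsimp only
    have hx' : ¬ ∀ i, x i ∈ Set.Icc (m i) (M i) := hx
    push_neg at hx'
    obtain ⟨j1, hj1⟩ := hx'
    exact Finset.prod_eq_zero (Finset.mem_univ j1) (hU0 i j1 (x j1) hj1)
  have hφ0 : ∀ x, x ∉ K → φ x = 0 := by
    intro x hx
    have : ∀ i, φ x i = 0 := fun i => hcomp0 i x hx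
    exact (WithLp.ext_iff 2).2 (funext this)
  have hPa0 : ∀ x, x ∉ K → Pa x = 0 := by
    intro x hx
    have hx' : ¬ ∀ i, x i ∈ Set.Icc (m i) (M i) := hx
    push_neg at hx'
    obtain ⟨j1, hj1⟩ := hx'
    exact Finset.prod_eq_zero (Finset.mem_univ j1) (hsuppA j1 (x j1) hj1)
  have hPb0 : ∀ x, x ∉ K → Pb x = 0 := by
    intro x hx
    have hx' : ¬ ∀ i, x i ∈ Set.Icc (m i) (M i) := hx
    push_neg at hx'
    obtain ⟨j1, hj1⟩ := hx'
    exact Finset.prod_eq_zero (Finset.mem_univ j1) (hsuppB j1 (x j1) hj1)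
  have hg0 : ∀ x, x ∉ K → g x = 0 := by
    intro x hx
    rw [hgdef]; dsimp only
    rw [hPa0 x hx, hPb0 x hx, sub_self]
  have hKcompact : IsCompact K := bx_compact m M
  have hφCS : HasCompactSupport φ := HasCompactSupport.intro hKcompact hφ0
  have hφts : tsupport φ ⊆ K :=
    closure_minimal (Function.support_subset_iff'.2 hφ0) (bx_closed m M)
  -- smoothness of φ
  have hφsm : ContDiff ℝ 1 φ := by
    rw [hφdef]
    unfold mkField
    apply ContDiff.comp
    · exact (PiLp.continuousLinearEquiv 2 ℝ (fun _ : Fin d => ℝ)).symm.contDiff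
    · apply contDiff_pi.2
      intro i
      have : (fun y : Ed d => comp i y) = fun y : Ed d => ∏ j, U i j (y j) := rfl
      rw [show (fun y : Ed d => comp i y) = comp i from rfl]
      rw [hcompdef]
      dsimp only
      apply contDiff_prod
      intro j _
      exact (hUsm i j).comp (EuclideanSpace.proj j : Ed d →L[ℝ] ℝ).contDiff
  -- bounds on 1d pieces
  have hUb : ∀ (i j : Fin d) (t : ℝ), j ≠ i → |U i j t| ≤ 2 / l := by
    intro i j t hji
    rw [hUdef]
    dsimp only
    rw [if_neg hji]
    have h2 : (0:ℝ) < 2 / l := by positivity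
    split
    · rw [abs_of_nonneg ((aB j).nonneg t)]
      calc (aB j).f t ≤ 2 / L := (aB j).le t
        _ ≤ 2 / l := by
          apply div_le_div_of_nonneg_left (by norm_num) hl hlL
    · rw [abs_of_nonneg ((bB j).nonneg t)]
      exact (bB j).le t
  have hcompb : ∀ (i : Fin d) (x : Ed d), |comp i x| ≤ (2/l)^(d-1) := by
    intro i x
    rw [hcompdef]
    dsimp only
    rw [← Finset.mul_prod_erase Finset.univ _ (Finset.mem_univ i), abs_mul, Finset.abs_prod]
    have h1 : |U i i (x i)| ≤ 1 := by
      rw [hUdef]; dsimp only; rw [if_pos rfl]; exact hH1 i (x i)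
    have h2 : ∏ k ∈ Finset.univ.erase i, |U i k (x k)| ≤ (2/l)^(d-1) := by
      calc ∏ k ∈ Finset.univ.erase i, |U i k (x k)|
          ≤ ∏ _k ∈ Finset.univ.erase i, (2/l) := by
            apply Finset.prod_le_prod (fun k _ => abs_nonneg _)
            intro k hk
            exact hUb i k (x k) (Finset.mem_erase.1 hk).1
        _ = (2/l)^(d-1) := by
            rw [Finset.prod_const, Finset.card_erase_of_mem (Finset.mem_univ i),
              Finset.card_univ, Fintype.card_fin]
    calc |U i i (x i)| * ∏ k ∈ Finset.univ.erase i, |U i k (x k)|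
        ≤ 1 * (2/l)^(d-1) := by
          apply mul_le_mul h1 h2 (Finset.prod_nonneg fun k _ => abs_nonneg _) zero_le_one
      _ = (2/l)^(d-1) := one_mul _
  set c0 : ℝ := Real.sqrt d * (2/l)^(d-1) with hc0def
  have hc0 : 0 < c0 := by
    apply mul_pos
    · apply Real.sqrt_pos.2
      exact_mod_cast lt_of_lt_of_le zero_lt_one (by exact_mod_cast hd)
    · positivity
  have hφnorm : ∀ x, ‖φ x‖ ≤ c0 := by
    intro x
    rw [EuclideanSpace.norm_eq]
    have hsum : (∑ i, ‖φ x i‖^2) ≤ d * ((2/l)^(d-1))^2 := by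
      calc (∑ i, ‖φ x i‖^2) ≤ ∑ _i : Fin d, ((2/l)^(d-1))^2 := by
            apply Finset.sum_le_sum
            intro i _
            have := hcompb i x
            rw [Real.norm_eq_abs]
            have habs : |φ x i| ≤ (2/l)^(d-1) := this
            nlinarith [abs_nonneg (φ x i)]
        _ = d * ((2/l)^(d-1))^2 := by
            rw [Finset.sum_const, Finset.card_univ, Fintype.card_fin, nsmul_eq_mul]
    calc Real.sqrt (∑ i, ‖φ x i‖^2) ≤ Real.sqrt (d * ((2/l)^(d-1))^2) :=
          Real.sqrt_le_sqrt hsum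
      _ = c0 := by
          rw [Real.sqrt_mul (by positivity), Real.sqrt_sq (by positivity), hc0def]
  -- rescaled field is admissible
  set goodφ : Ed d → Ed d := fun x => c0⁻¹ • φ x with hgoodφdef
  have hgood_mem : goodφ ∈ {ψ : Ed d → Ed d | ContDiff ℝ 1 ψ ∧ HasCompactSupport ψ ∧
      tsupport ψ ⊆ Ω ∧ ∀ x, ‖ψ x‖ ≤ 1} := by
    refine ⟨hφsm.const_smul _, ?_, ?_, ?_⟩
    · exact HasCompactSupport.intro hKcompact
        (fun x hx => by show c0⁻¹ • φ x = 0; rw [hφ0 x hx, smul_zero])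
    · have h1 : tsupport goodφ ⊆ K := closure_minimal (Function.support_subset_iff'.2
        (fun x hx => by show c0⁻¹ • φ x = 0; rw [hφ0 x hx, smul_zero])) (bx_closed m M)
      exact h1.trans (hKsub_obx.trans hΩ)
    · intro x
      rw [hgoodφdef]
      dsimp only
      rw [norm_smul, Real.norm_eq_abs, abs_of_pos (inv_pos.2 hc0)]
      calc c0⁻¹ * ‖φ x‖ ≤ c0⁻¹ * c0 :=
          mul_le_mul_of_nonneg_left (hφnorm x) (le_of_lt (inv_pos.2 hc0))
        _ = 1 := inv_mul_cancel₀ (ne_of_gt hc0)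
  -- divergence of rescaled field
  have hφfd : ∀ x, DifferentiableAt ℝ φ x := by
    intro x
    exact (mkField_hasFDerivAt comp _ x (fun i => hcompfd i x)).differentiableAt
  have hgooddiv : ∀ x, divergence goodφ x = c0⁻¹ * g x := by
    intro x
    rw [← hφdiv x]
    rw [divergence, divergence, Finset.mul_sum]
    apply Finset.sum_congr rfl
    intro i _
    have hfd : fderiv ℝ goodφ x = c0⁻¹ • fderiv ℝ φ x := by
      rw [hgoodφdef]
      exact fderiv_fun_const_smul (hφfd x) _
    rw [hfd]
    rfl
  -- the variational bound
  set V : ℝ := (var Ω f).toReal with hVdef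
  have hvb : ∫ x in Ω, f x * divergence goodφ x ≤ V := by
    have h1 : ENNReal.ofReal (∫ x in Ω, f x * divergence goodφ x) ≤ var Ω f := by
      rw [var]
      exact le_iSup₂ (f := fun ψ (_ : ψ ∈ {ψ : Ed d → Ed d | ContDiff ℝ 1 ψ ∧
        HasCompactSupport ψ ∧ tsupport ψ ⊆ Ω ∧ ∀ x, ‖ψ x‖ ≤ 1}) =>
        ENNReal.ofReal (∫ x in Ω, f x * divergence ψ x)) goodφ hgood_mem
    rcases le_or_gt (∫ x in Ω, f x * divergence goodφ x) 0 with h | h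
    · exact le_trans h ENNReal.toReal_nonneg
    · have h2 := ENNReal.toReal_mono hvar h1
      rwa [ENNReal.toReal_ofReal (le_of_lt h)] at h2
  -- localization of the integral
  set R : Set (Ed d) := bx A (fun i => A i + L) with hRdef
  have hKR : K ⊆ R := hKsub_obx.trans (obx_subset_bx _ _)
  have hloc : ∫ x in Ω, f x * g x = ∫ x in R, f x * g x := by
    rw [setIntegral_eq_integral_of_forall_compl_eq_zero
      (fun x hx => by rw [hg0 x (fun hc => hx (hKsub_obx.trans hΩ hc)), mul_zero])]
    rw [setIntegral_eq_integral_of_forall_compl_eq_zero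
      (fun x hx => by rw [hg0 x (fun hc => hx (hKR hc)), mul_zero])]
  have hΩint : ∫ x in Ω, f x * divergence goodφ x = c0⁻¹ * ∫ x in R, f x * g x := by
    have h1 : (fun x => f x * divergence goodφ x) = fun x => c0⁻¹ * (f x * g x) := by
      funext x
      rw [hgooddiv x]
      ring
    rw [h1, MeasureTheory.integral_const_mul, hloc]
  -- integrability of the pieces
  have hbint : ∀ (h : Ed d → ℝ) (B : ℝ), Continuous h → (∀ x, |h x| ≤ B) →
      IntegrableOn (fun x => f x * h x) R volume := by
    intro h B hc hB
    have h1 : Integrable (fun x => h x * f x) (volume.restrict R) :=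
      MeasureTheory.Integrable.bdd_mul (c := B) hfR (hc.aestronglyMeasurable)
        (ae_of_all _ fun x => by simpa [Real.norm_eq_abs] using hB x)
    have h2 : (fun x => f x * h x) = fun x => h x * f x := by funext x; ring
    rw [h2]
    exact h1
  have hPacont : Continuous Pa := by
    rw [hPadef]
    apply continuous_finset_prod
    intro j _
    exact ((aB j).smooth.continuous).comp (PiLp.continuous_apply 2 (fun _ : Fin d => ℝ) j)
  have hPbcont : Continuous Pb := by
    rw [hPbdef]
    apply continuous_finset_prod
    intro j _
    exact ((bB j).smooth.continuous).comp (PiLp.continuous_apply 2 (fun _ : Fin d => ℝ) j)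
  have hPab : ∀ x, |Pa x| ≤ (2/l)^d := by
    intro x
    rw [hPadef]
    dsimp only
    rw [Finset.abs_prod]
    calc ∏ j, |(aB j).f (x j)| ≤ ∏ _j : Fin d, (2/l) := by
          apply Finset.prod_le_prod (fun j _ => abs_nonneg _)
          intro j _
          rw [abs_of_nonneg ((aB j).nonneg _)]
          calc (aB j).f (x j) ≤ 2/L := (aB j).le _
            _ ≤ 2/l := div_le_div_of_nonneg_left (by norm_num) hl hlL
      _ = (2/l)^d := by rw [Finset.prod_const, Finset.card_univ, Fintype.card_fin]
  have hPbb : ∀ x, |Pb x| ≤ (2/l)^d := by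
    intro x
    rw [hPbdef]
    dsimp only
    rw [Finset.abs_prod]
    calc ∏ j, |(bB j).f (x j)| ≤ ∏ _j : Fin d, (2/l) := by
          apply Finset.prod_le_prod (fun j _ => abs_nonneg _)
          intro j _
          rw [abs_of_nonneg ((bB j).nonneg _)]
          exact (bB j).le _
      _ = (2/l)^d := by rw [Finset.prod_const, Finset.card_univ, Fintype.card_fin]
  have hintPa : IntegrableOn (fun x => f x * Pa x) R volume :=
    hbint Pa _ hPacont hPab
  have hintPb : IntegrableOn (fun x => f x * Pb x) R volume :=
    hbint Pb _ hPbcont hPbb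
  have hsplit : ∫ x in R, f x * g x = (∫ x in R, f x * Pa x) - ∫ x in R, f x * Pb x := by
    rw [← MeasureTheory.integral_sub hintPa hintPb]
    apply setIntegral_congr_fun (bx_measurable _ _)
    intro x _
    show f x * (Pa x - Pb x) = f x * Pa x - f x * Pb x
    ring
  -- lower bound via the inner shrunk box
  set S : Set (Ed d) := bx (fun i => A i + δ) (fun i => A i + L - δ) with hSdef
  have hSsubR : S ⊆ R := by
    intro x hx i
    have h1 : A i + δ ≤ x i := (hx i).1
    have h2 : x i ≤ A i + L - δ := (hx i).2
    constructor
    · show A i ≤ x i; linarith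
    · show x i ≤ A i + L; linarith
  have hSind : ∫ x in S, f x = ∫ x in R, S.indicator f x := by
    rw [setIntegral_indicator (bx_measurable _ _), Set.inter_eq_self_of_subset_right hSsubR]
  have hlow : (L^d)⁻¹ * ∫ x in S, f x ≤ ∫ x in R, f x * Pa x := by
    rw [hSind, ← MeasureTheory.integral_const_mul]
    apply setIntegral_mono_on
    · exact (hfR.indicator (bx_measurable _ _)).const_mul _
    · exact hintPa
    · exact bx_measurable _ _
    · intro x hxR
      by_cases hxS : x ∈ S
      · rw [Set.indicator_of_mem hxS]
        have hPage : (L^d)⁻¹ ≤ Pa x := by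
          rw [hPadef]
          dsimp only
          calc (L^d)⁻¹ = ∏ _j : Fin d, (1/L) := by
                rw [Finset.prod_const, Finset.card_univ, Fintype.card_fin, one_div, inv_pow]
            _ ≤ ∏ j, (aB j).f (x j) := by
                apply Finset.prod_le_prod (fun j _ => by positivity)
                intro j _
                exact (aB j).ge _ (hxS j)
        have hf0 : 0 ≤ f x := hpos x hxR
        calc (L^d)⁻¹ * f x ≤ Pa x * f x :=
            mul_le_mul_of_nonneg_right hPage hf0
          _ = f x * Pa x := mul_comm _ _
      · rw [Set.indicator_of_notMem hxS, mul_zero]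
        have hPa_nn : 0 ≤ Pa x := Finset.prod_nonneg fun j _ => (aB j).nonneg _
        exact mul_nonneg (hpos x hxR) hPa_nn
  -- upper bound via the small cube
  set P : Set (Ed d) := bx Cc (fun i => Cc i + l) with hPdef
  have hPsubR : P ⊆ R := by
    intro x hx i
    have h1 : Cc i ≤ x i := (hx i).1
    have h2 : x i ≤ Cc i + l := (hx i).2
    have h3 := (hsub i).1
    have h4 := (hsub i).2
    constructor
    · show A i ≤ x i; linarith
    · show x i ≤ A i + L; linarith
  have hfP : IntegrableOn f P volume := hfR.mono_set hPsubR
  have hup : ∫ x in R, f x * Pb x ≤ (2/l)^d * ∫ x in P, f x := by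
    have hPind : ∫ x in P, f x = ∫ x in R, P.indicator f x := by
      rw [setIntegral_indicator (bx_measurable _ _), Set.inter_eq_self_of_subset_right hPsubR]
    rw [hPind, ← MeasureTheory.integral_const_mul]
    apply setIntegral_mono_on
    · exact hintPb
    · exact (hfR.indicator (bx_measurable _ _)).const_mul _
    · exact bx_measurable _ _
    · intro x hxR
      by_cases hxP : x ∈ P
      · rw [Set.indicator_of_mem hxP]
        have hf0 : 0 ≤ f x := hpos x hxR
        have hPble : Pb x ≤ (2/l)^d := le_trans (le_abs_self _) (hPbb x)
        calc f x * Pb x ≤ f x * (2/l)^d := mul_le_mul_of_nonneg_left hPble hf0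
          _ = (2/l)^d * f x := mul_comm _ _
      · rw [Set.indicator_of_notMem hxP, mul_zero]
        have hx' : ¬ ∀ i, x i ∈ Set.Icc (Cc i) (Cc i + l) := hxP
        push_neg at hx'
        obtain ⟨j1, hj1⟩ := hx'
        have hb0 : (bB j1).f (x j1) = 0 := by
          apply (bB j1).supp
          intro hc
          exact hj1 ⟨by linarith [hc.1, hl], by linarith [hc.2, hl]⟩
        have : Pb x = 0 := Finset.prod_eq_zero (Finset.mem_univ j1) hb0
        rw [this, mul_zero]
  -- conclusion
  have hRg : ∫ x in R, f x * g x ≤ c0 * V := by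
    have h1 : ∫ x in R, f x * g x = c0 * ∫ x in Ω, f x * divergence goodφ x := by
      rw [hΩint, ← mul_assoc, mul_inv_cancel₀ (ne_of_gt hc0), one_mul]
    rw [h1]
    exact mul_le_mul_of_nonneg_left hvb (le_of_lt hc0)
  have harith : (∫ x in R, f x * Pa x) = (∫ x in R, f x * g x) + ∫ x in R, f x * Pb x := by
    rw [hsplit]; ring
  calc (L^d)⁻¹ * ∫ x in S, f x ≤ ∫ x in R, f x * Pa x := hlow
    _ = (∫ x in R, f x * g x) + ∫ x in R, f x * Pb x := harith
    _ ≤ c0 * V + (2/l)^d * ∫ x in P, f x := add_le_add hRg hup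

lemma bx_ae_obx {d : ℕ} (u : Fin d → ℝ) (L : ℝ) :
    (bx u (fun i => u i + L) : Set (Ed d)) =ᵐ[volume] obx u (fun i => u i + L) := by
  rw [MeasureTheory.ae_eq_set]
  constructor
  · have h1 := volume_bx u (fun i => u i + L)
    have h2 := volume_obx u (fun i => u i + L)
    have hfin : volume (obx u (fun i => u i + L) : Set (Ed d)) ≠ ⊤ := by
      rw [h2]
      exact ENNReal.prod_ne_top fun i _ => ENNReal.ofReal_ne_top
    rw [measure_diff (obx_subset_bx _ _) (obx_measurable _ _).nullMeasurableSet hfin, h1, h2,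
      tsub_self]
  · rw [Set.diff_eq_empty.2 (obx_subset_bx _ _)]
    exact measure_empty

lemma key {d : ℕ} (hd : 1 ≤ d) (A Cc : Fin d → ℝ) (L l : ℝ) (hL : 0 < L) (hl : 0 < l)
    (hsub : ∀ j, A j ≤ Cc j ∧ Cc j + l ≤ A j + L)
    (f : Ed d → ℝ) (hmeas : Measurable f)
    (Ω : Set (Ed d)) (hΩ : obx A (fun i => A i + L) ⊆ Ω)
    (hfR : IntegrableOn f (bx A (fun i => A i + L)) volume)
    (hpos : ∀ x ∈ bx A (fun i => A i + L), 0 ≤ f x)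
    (hvar : var Ω f ≠ ⊤) :
    ∫ x in bx A (fun i => A i + L), f x ≤
      L^d * (Real.sqrt d * (2/l)^(d-1) * (var Ω f).toReal
        + (2/l)^d * ∫ x in bx Cc (fun i => Cc i + l), f x) := by
  set B : ℝ := Real.sqrt d * (2/l)^(d-1) * (var Ω f).toReal
    + (2/l)^d * ∫ x in bx Cc (fun i => Cc i + l), f x with hBdef
  set δk : ℕ → ℝ := fun k => L/(4*(k+1)) with hδkdef
  have hδkpos : ∀ k, 0 < δk k := by
    intro k
    apply div_pos hL
    positivity
  have hδk4 : ∀ k, δk k ≤ L/4 := by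
    intro k
    rw [hδkdef]
    dsimp only
    rw [div_le_div_iff₀ (by positivity) (by norm_num)]
    have h0 : (0:ℝ) ≤ (k:ℝ) := Nat.cast_nonneg k
    have : (1:ℝ) ≤ (k:ℝ) + 1 := by linarith
    nlinarith
  have hδkanti : ∀ j k : ℕ, j ≤ k → δk k ≤ δk j := by
    intro j k hjk
    apply div_le_div_of_nonneg_left (le_of_lt hL) (by positivity)
    have : (j:ℝ) ≤ (k:ℝ) := Nat.cast_le.2 hjk
    linarith
  set Sk : ℕ → Set (Ed d) := fun k => bx (fun i => A i + δk k) (fun i => A i + L - δk k)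
    with hSkdef
  have hSkmono : Monotone Sk := by
    intro j k hjk x hx i
    have h1 : A i + δk j ≤ x i := (hx i).1
    have h2 : x i ≤ A i + L - δk j := (hx i).2
    have h3 := hδkanti j k hjk
    constructor
    · show A i + δk k ≤ x i; linarith
    · show x i ≤ A i + L - δk k; linarith
  have hunion : (⋃ k, Sk k) = obx A (fun i => A i + L) := by
    apply Set.Subset.antisymm
    · apply Set.iUnion_subset
      intro k x hx i
      have h1 : A i + δk k ≤ x i := (hx i).1
      have h2 : x i ≤ A i + L - δk k := (hx i).2
      have h3 := hδkpos k
      constructor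
      · show A i < x i; linarith
      · show x i < A i + L; linarith
    · intro x hx
      have hg : ∀ i, 0 < min (x i - A i) (A i + L - x i) := by
        intro i
        have h1 : A i < x i := (hx i).1
        have h2 : x i < A i + L := (hx i).2
        apply lt_min <;> linarith
      have hn : ∀ i : Fin d, ∃ n : ℕ, L / (4 * min (x i - A i) (A i + L - x i)) < n :=
        fun i => exists_nat_gt _
      choose n hnn using hn
      set k : ℕ := Finset.univ.sup n with hkdef
      refine Set.mem_iUnion.2 ⟨k, fun i => ?_⟩
      have hki : (n i : ℝ) ≤ (k : ℝ) := Nat.cast_le.2 (Finset.le_sup (Finset.mem_univ i))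
      have hgi := hg i
      have hlt : L / (4 * min (x i - A i) (A i + L - x i)) < (k:ℝ) + 1 := by
        calc L / (4 * min (x i - A i) (A i + L - x i)) < (n i : ℝ) := hnn i
          _ ≤ (k:ℝ) := hki
          _ ≤ (k:ℝ) + 1 := by linarith
      have hδle : δk k ≤ min (x i - A i) (A i + L - x i) := by
        rw [hδkdef]
        dsimp only
        rw [div_le_iff₀ (by positivity)]
        rw [div_lt_iff₀ (by positivity)] at hlt
        nlinarith [hgi]
      have hδ1 : δk k ≤ x i - A i := le_trans hδle (min_le_left _ _)
      have hδ2 : δk k ≤ A i + L - x i := le_trans hδle (min_le_right _ _)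
      constructor
      · show A i + δk k ≤ x i; linarith
      · show x i ≤ A i + L - δk k; linarith
  have hobxint : IntegrableOn f (⋃ k, Sk k) volume := by
    rw [hunion]
    exact hfR.mono_set (obx_subset_bx _ _)
  have htend := MeasureTheory.tendsto_setIntegral_of_monotone
    (fun k => bx_measurable _ _) hSkmono hobxint
  have hbound : ∀ k, ∫ x in Sk k, f x ≤ L^d * B := by
    intro k
    have hkd := keydelta hd A Cc L l (δk k) hL hl (hδkpos k) (hδk4 k) hsub f hmeas Ω hΩ hfR
      hpos hvar
    have hLd : (0:ℝ) < L^d := by positivity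
    rw [hBdef]
    calc ∫ x in Sk k, f x = L^d * ((L^d)⁻¹ * ∫ x in Sk k, f x) := by
          rw [← mul_assoc, mul_inv_cancel₀ (ne_of_gt hLd), one_mul]
      _ ≤ L^d * _ := mul_le_mul_of_nonneg_left hkd (le_of_lt hLd)
  have hlim : ∫ x in (⋃ k, Sk k), f x ≤ L^d * B :=
    le_of_tendsto htend (Filter.Eventually.of_forall hbound)
  rw [hunion] at hlim
  rw [setIntegral_congr_set (bx_ae_obx A L)]
  exact hlim


/-- For an increasing sequence of cubes `Q₁ ⊆ Q₂ ⊆ …` with union `Q_∞` and a nonnegative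
`f` on `Q_∞`, integrable on each `Qₙ`, with `∫_{Q₁} f < ∞` and `var_{int Q_∞} f < ∞`,
the averages `f_{Qₙ}` have finite `limsup`. -/
theorem limsup_average_lt_top {d : ℕ} (hd : 1 ≤ d)
    (Q : ℕ → Set (Ed d)) (hQ : ∀ n, IsCube (Q n)) (hmono : ∀ n, Q n ⊆ Q (n + 1))
    (f : Ed d → ℝ) (hmeas : Measurable f) (hpos : ∀ x ∈ ⋃ n, Q n, 0 ≤ f x)
    (hint : ∀ n, IntegrableOn f (Q n) volume)
    (hint1 : ∫⁻ x in Q 0, ENNReal.ofReal (f x) < ∞)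
    (hvar : var (interior (⋃ n, Q n)) f < ∞) :
    Filter.limsup (fun n => ENNReal.ofReal (⨍ z in Q n, f z)) Filter.atTop < ∞ := by
  choose An Ln hLn hQeq using hQ
  set Ω : Set (Ed d) := interior (⋃ n, Q n) with hΩdef
  have hvfin : var Ω f ≠ ⊤ := ne_of_lt hvar
  have hQbx : ∀ n, Q n = bx (An n) (fun i => An n i + Ln n) := fun n => hQeq n
  have hQmono : Monotone Q := monotone_nat_of_le_succ hmono
  -- coordinates of the inclusion Q 0 ⊆ Q n
  have hsub : ∀ n j, An n j ≤ An 0 j ∧ An 0 j + Ln 0 ≤ An n j + Ln n := by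
    intro n j
    have h0n : Q 0 ⊆ Q n := hQmono (Nat.zero_le n)
    have hy1 : (An 0 : Ed d) ∈ Q 0 := by
      rw [hQbx 0]
      intro i
      constructor
      · show An 0 i ≤ An 0 i; linarith
      · show An 0 i ≤ An 0 i + Ln 0; linarith [hLn 0]
    have hy2 : (WithLp.toLp 2 (fun i => An 0 i + Ln 0) : Ed d) ∈ Q 0 := by
      rw [hQbx 0]
      intro i
      constructor
      · show An 0 i ≤ An 0 i + Ln 0; linarith [hLn 0]
      · show An 0 i + Ln 0 ≤ An 0 i + Ln 0; linarith
    have h1 := h0n hy1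
    have h2 := h0n hy2
    rw [hQbx n] at h1 h2
    exact ⟨(h1 j).1, (h2 j).2⟩
  set B : ℝ := Real.sqrt d * (2/(Ln 0))^(d-1) * (var Ω f).toReal
    + (2/(Ln 0))^d * ∫ x in bx (An 0) (fun i => An 0 i + Ln 0), f x with hBdef
  have hkey : ∀ n, ∫ x in Q n, f x ≤ (Ln n)^d * B := by
    intro n
    rw [hQbx n]
    apply key hd (An n) (An 0) (Ln n) (Ln 0) (hLn n) (hLn 0) (hsub n) f hmeas Ω
    · apply interior_maximal _ (obx_open _ _)
      exact ((obx_subset_bx _ _).trans (hQbx n ▸ Set.subset_iUnion Q n))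
    · rw [← hQbx n]; exact hint n
    · intro x hx
      apply hpos
      exact Set.mem_iUnion.2 ⟨n, (hQbx n) ▸ hx⟩
    · exact hvfin
  have hvol : ∀ n, (volume (Q n)).toReal = (Ln n)^d := by
    intro n
    rw [hQbx n, volume_bx]
    have h1 : ∀ i : Fin d, ENNReal.ofReal (An n i + Ln n - An n i) = ENNReal.ofReal (Ln n) := by
      intro i; congr 1; ring
    rw [Finset.prod_congr rfl (fun i _ => h1 i), Finset.prod_const, Finset.card_univ,
      Fintype.card_fin, ENNReal.toReal_pow, ENNReal.toReal_ofReal (le_of_lt (hLn n))]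
  have havg : ∀ n, (⨍ z in Q n, f z) ≤ B := by
    intro n
    rw [MeasureTheory.setAverage_eq, smul_eq_mul, measureReal_def, hvol n]
    have hLd : (0:ℝ) < (Ln n)^d := pow_pos (hLn n) d
    calc ((Ln n)^d)⁻¹ * ∫ x in Q n, f x ≤ ((Ln n)^d)⁻¹ * ((Ln n)^d * B) :=
        mul_le_mul_of_nonneg_left (hkey n) (le_of_lt (inv_pos.2 hLd))
      _ = B := by rw [← mul_assoc, inv_mul_cancel₀ (ne_of_gt hLd), one_mul]
  have hlimsup : Filter.limsup (fun n => ENNReal.ofReal (⨍ z in Q n, f z)) Filter.atTop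
      ≤ ENNReal.ofReal B := by
    apply Filter.limsup_le_of_le (by isBoundedDefault)
    exact Filter.Eventually.of_forall fun n => ENNReal.ofReal_le_ofReal (havg n)
  exact lt_of_le_of_lt hlimsup ENNReal.ofReal_lt_top


end KEY

end
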